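/- Let G be a cograph on n vertices. Then G or its complement contains a complete bipartite subgraph K_{m,m} with m ≥ ⌊n/4⌋. -/

import Mathlib

/-- `G` is a cograph, i.e. it has no induced path on four vertices. -/
def IsCograph {V : Type*} (G : SimpleGraph V) : Prop :=
  ¬∃ a b c d : V, a ≠ c ∧ a ≠ d ∧ b ≠ d ∧
    G.Adj a b ∧ G.Adj b c ∧ G.Adj c d ∧ ¬G.Adj a c ∧ ¬G.Adj a d ∧ ¬G.Adj b d

/-- `G` contains a complete bipartite subgraph `K_{m,m}`. -/
def HasBiclique {V : Type*} (G : SimpleGraph V) (m : ℕ) : Prop :=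
  ∃ A B : Finset V, Disjoint A B ∧ A.card = m ∧ B.card = m ∧
    ∀ a ∈ A, ∀ b ∈ B, G.Adj a b

lemma hasBiclique_zero {V : Type*} (G : SimpleGraph V) : HasBiclique G 0 :=
  ⟨∅, ∅, by simp⟩

lemma isCograph_compl {V : Type*} {G : SimpleGraph V} (hG : IsCograph G) :
    IsCograph Gᶜ := by
  rintro ⟨a, b, c, d, hac, had, hbd, h1, h2, h3, h4, h5, h6⟩
  obtain ⟨hab, nab⟩ := (SimpleGraph.compl_adj _ _ _).mp h1
  obtain ⟨hbc, nbc⟩ := (SimpleGraph.compl_adj _ _ _).mp h2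
  obtain ⟨hcd, ncd⟩ := (SimpleGraph.compl_adj _ _ _).mp h3
  have gac : G.Adj a c := by
    by_contra h; exact h4 ((SimpleGraph.compl_adj _ _ _).mpr ⟨hac, h⟩)
  have gad : G.Adj a d := by
    by_contra h; exact h5 ((SimpleGraph.compl_adj _ _ _).mpr ⟨had, h⟩)
  have gbd : G.Adj b d := by
    by_contra h; exact h6 ((SimpleGraph.compl_adj _ _ _).mpr ⟨hbd, h⟩)
  exact hG ⟨b, d, a, c, hab.symm, hbc, fun h => hcd h.symm,
    gbd, gad.symm, gac,
    fun h => nab h.symm, nbc, fun h => ncd h.symm⟩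

open Finset

/-- Extension step: if `S` has a "union-type" split, then `insert v S` has a split. -/
lemma extend_split {V : Type*} [DecidableEq V] (G : SimpleGraph V) (hG : IsCograph G)
    (v : V) (S A B : Finset V) (hv : v ∉ S) (hAB : A ∪ B = S) (hd : Disjoint A B)
    (hA : A.Nonempty) (hB : B.Nonempty)
    (hsplit : ∀ a ∈ A, ∀ b ∈ B, ¬G.Adj a b) :
    ∃ A' B' : Finset V, Disjoint A' B' ∧ A' ∪ B' = insert v S ∧
      A'.Nonempty ∧ B'.Nonempty ∧
      ((∀ a ∈ A', ∀ b ∈ B', G.Adj a b) ∨ (∀ a ∈ A', ∀ b ∈ B', ¬G.Adj a b)) := by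
  classical
  have hAS : A ⊆ S := by rw [← hAB]; exact subset_union_left
  have hBS : B ⊆ S := by rw [← hAB]; exact subset_union_right
  by_cases h1 : ∀ a ∈ A, ¬G.Adj v a
  · refine ⟨A, insert v B, ?_, ?_, hA, insert_nonempty _ _, Or.inr ?_⟩
    · rw [disjoint_insert_right]
      exact ⟨fun hvA => hv (hAS hvA), hd⟩
    · rw [union_insert, hAB]
    · intro a ha b hb
      rcases mem_insert.mp hb with rfl | hb
      · exact fun h => h1 a ha h.symm
      · exact hsplit a ha b hb
  by_cases h2 : ∀ b ∈ B, ¬G.Adj v b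
  · refine ⟨insert v A, B, ?_, ?_, insert_nonempty _ _, hB, Or.inr ?_⟩
    · rw [disjoint_insert_left]
      exact ⟨fun hvB => hv (hBS hvB), hd⟩
    · rw [insert_union, hAB]
    · intro a ha b hb
      rcases mem_insert.mp ha with rfl | ha
      · exact h2 b hb
      · exact hsplit a ha b hb
  by_cases h3 : ∀ u ∈ S, G.Adj v u
  · refine ⟨{v}, S, ?_, ?_, singleton_nonempty _, hA.mono hAS, Or.inl ?_⟩
    · simpa using hv
    · rw [insert_eq]
    · intro a ha b hb
      rw [mem_singleton] at ha
      subst ha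
      exact h3 b hb
  push_neg at h1 h2 h3
  obtain ⟨a0, ha0, hva0⟩ := h1
  obtain ⟨b0, hb0, hvb0⟩ := h2
  obtain ⟨w, hw, hvw⟩ := h3
  -- key: within A (resp. B), no edges between neighbors and non-neighbors of v
  have keyA : ∀ x ∈ A, ∀ y ∈ A, G.Adj v x → ¬G.Adj v y → ¬G.Adj x y := by
    intro x hx y hy hvx hvy hxy
    refine hG ⟨y, x, v, b0, ?_, ?_, ?_, hxy.symm, hvx.symm, hvb0, ?_, ?_, ?_⟩
    · exact fun h => hv (h ▸ hAS hy)
    · exact fun h => (disjoint_left.mp hd hy) (h ▸ hb0)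
    · exact fun h => (disjoint_left.mp hd hx) (h ▸ hb0)
    · exact fun h => hvy h.symm
    · exact hsplit y hy b0 hb0
    · exact hsplit x hx b0 hb0
  have keyB : ∀ x ∈ B, ∀ y ∈ B, G.Adj v x → ¬G.Adj v y → ¬G.Adj x y := by
    intro x hx y hy hvx hvy hxy
    refine hG ⟨y, x, v, a0, ?_, ?_, ?_, hxy.symm, hvx.symm, hva0, ?_, ?_, ?_⟩
    · exact fun h => hv (h ▸ hBS hy)
    · exact fun h => (disjoint_left.mp hd (h ▸ ha0)) hy
    · exact fun h => (disjoint_left.mp hd (h ▸ ha0)) hx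
    · exact fun h => hvy h.symm
    · exact fun h => hsplit a0 ha0 y hy h.symm
    · exact fun h => hsplit a0 ha0 x hx h.symm
  refine ⟨insert v (S.filter (fun u => G.Adj v u)),
    S.filter (fun u => ¬G.Adj v u), ?_, ?_, insert_nonempty _ _,
    ⟨w, mem_filter.mpr ⟨hw, hvw⟩⟩, Or.inr ?_⟩
  · rw [disjoint_insert_left]
    constructor
    · exact fun h => hv (mem_filter.mp h).1
    · exact disjoint_filter_filter_not S S _
  · rw [insert_union, filter_union_filter_not_eq]
  · intro a ha b hb
    obtain ⟨hbS, hvb⟩ := mem_filter.mp hb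
    rcases mem_insert.mp ha with rfl | ha
    · exact hvb
    · obtain ⟨haS, hva⟩ := mem_filter.mp ha
      rw [← hAB] at haS hbS
      rcases mem_union.mp haS with haA | haB
      · rcases mem_union.mp hbS with hbA | hbB
        · exact keyA a haA b hbA hva hvb
        · exact hsplit a haA b hbB
      · rcases mem_union.mp hbS with hbA | hbB
        · exact fun h => hsplit b hbA a haB h.symm
        · exact keyB a haB b hbB hva hvb

/-- Seinsche: every set of ≥ 2 vertices of a cograph splits into two nonempty
parts with either all cross edges present or all absent. -/
lemma cograph_split {V : Type*} [DecidableEq V] (G : SimpleGraph V) (hG : IsCograph G) :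
    ∀ n (S : Finset V), S.card ≤ n → 2 ≤ S.card →
    ∃ A B : Finset V, Disjoint A B ∧ A ∪ B = S ∧ A.Nonempty ∧ B.Nonempty ∧
      ((∀ a ∈ A, ∀ b ∈ B, G.Adj a b) ∨ (∀ a ∈ A, ∀ b ∈ B, ¬G.Adj a b)) := by
  intro n
  induction n with
  | zero => intro S h1 h2; omega
  | succ n ih =>
    intro S hle h2
    by_cases hS2 : S.card = 2
    · obtain ⟨x, y, hxy, rfl⟩ := card_eq_two.mp hS2
      by_cases hadj : G.Adj x y
      · refine ⟨{x}, {y}, by simp [hxy], by rw [insert_eq], singleton_nonempty _,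
          singleton_nonempty _, Or.inl ?_⟩
        intro a ha b hb
        rw [mem_singleton] at ha hb
        subst ha; subst hb; exact hadj
      · refine ⟨{x}, {y}, by simp [hxy], by rw [insert_eq], singleton_nonempty _,
          singleton_nonempty _, Or.inr ?_⟩
        intro a ha b hb
        rw [mem_singleton] at ha hb
        subst ha; subst hb; exact hadj
    · have h3 : 3 ≤ S.card := by omega
      obtain ⟨v, hvS⟩ : S.Nonempty := card_pos.mp (by omega)
      set S' := S.erase v with hS'
      have hvS' : v ∉ S' := notMem_erase v S
      have hins : insert v S' = S := insert_erase hvS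
      have hcard' : S'.card = S.card - 1 := card_erase_of_mem hvS
      obtain ⟨A, B, hd, hAB, hA, hB, hsplit⟩ := ih S' (by omega) (by omega)
      rcases hsplit with hjoin | hunion
      · -- join type for G = union type for Gᶜ
        have hsplit' : ∀ a ∈ A, ∀ b ∈ B, ¬Gᶜ.Adj a b := by
          intro a ha b hb h
          exact ((SimpleGraph.compl_adj _ _ _).mp h).2 (hjoin a ha b hb)
        obtain ⟨A', B', hd', hAB', hA', hB', hsplit'⟩ :=
          extend_split Gᶜ (isCograph_compl hG) v S' A B hvS' hAB hd hA hB hsplit'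
        rw [hins] at hAB'
        refine ⟨A', B', hd', hAB', hA', hB', ?_⟩
        rcases hsplit' with hj | hu
        · exact Or.inr fun a ha b hb => ((SimpleGraph.compl_adj _ _ _).mp (hj a ha b hb)).2
        · refine Or.inl fun a ha b hb => ?_
          by_contra hnadj
          exact hu a ha b hb ((SimpleGraph.compl_adj _ _ _).mpr
            ⟨fun h => (disjoint_left.mp hd' ha) (h ▸ hb), hnadj⟩)
      · obtain ⟨A', B', hd', hAB', hA', hB', hsplit'⟩ :=
          extend_split G hG v S' A B hvS' hAB hd hA hB hunion
        rw [hins] at hAB'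
        exact ⟨A', B', hd', hAB', hA', hB', hsplit'⟩

/-- Main induction: `S` a vertex set, `R` universal to `S` in `G`,
`Q` universal to `S` in `Gᶜ`, both of size at most `N/4` where
`N = |S| + |R| + |Q|`.  Then there is a biclique of size `≥ N/4`. -/
lemma cograph_main {V : Type*} [DecidableEq V] (G : SimpleGraph V) (hG : IsCograph G) :
    ∀ n (S R Q : Finset V), S.card ≤ n →
    Disjoint S R → Disjoint S Q → Disjoint R Q →
    (∀ x ∈ R, ∀ s ∈ S, G.Adj x s) →
    (∀ x ∈ Q, ∀ s ∈ S, ¬G.Adj x s) →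
    R.card ≤ (S.card + R.card + Q.card) / 4 →
    Q.card ≤ (S.card + R.card + Q.card) / 4 →
    ∃ m : ℕ, (S.card + R.card + Q.card) / 4 ≤ m ∧
      (HasBiclique G m ∨ HasBiclique Gᶜ m) := by
  intro n
  induction n with
  | zero =>
    intro S R Q hle hSR hSQ hRQ hRuniv hQuniv hR4 hQ4
    have hS0 : S.card = 0 := by omega
    refine ⟨0, by omega, Or.inl (hasBiclique_zero G)⟩
  | succ n ih =>
    intro S R Q hle hSR hSQ hRQ hRuniv hQuniv hR4 hQ4
    set N := S.card + R.card + Q.card with hN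
    by_cases hN4 : N / 4 = 0
    · exact ⟨0, by omega, Or.inl (hasBiclique_zero G)⟩
    have hS2 : 2 ≤ S.card := by omega
    obtain ⟨A, B, hd, hAB, hA, hB, hsplit⟩ :=
      cograph_split G hG S.card S le_rfl hS2
    -- arrange A to be the larger part
    obtain ⟨A, B, hd, hAB, hA, hB, hBA, hsplit⟩ :
        ∃ A B : Finset V, Disjoint A B ∧ A ∪ B = S ∧ A.Nonempty ∧ B.Nonempty ∧
          B.card ≤ A.card ∧
          ((∀ a ∈ A, ∀ b ∈ B, G.Adj a b) ∨ (∀ a ∈ A, ∀ b ∈ B, ¬G.Adj a b)) := by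
      rcases le_total B.card A.card with h | h
      · exact ⟨A, B, hd, hAB, hA, hB, h, hsplit⟩
      · refine ⟨B, A, hd.symm, by rw [union_comm, hAB], hB, hA, h, ?_⟩
        rcases hsplit with hj | hu
        · exact Or.inl fun b hb a ha => (hj a ha b hb).symm
        · exact Or.inr fun b hb a ha => fun h' => hu a ha b hb h'.symm
    have hAS : A ⊆ S := by rw [← hAB]; exact subset_union_left
    have hBS : B ⊆ S := by rw [← hAB]; exact subset_union_right
    have hcardS : A.card + B.card = S.card := by
      rw [← hAB]; exact (card_union_of_disjoint hd).symm
    have hBne : 1 ≤ B.card := card_pos.mpr hB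
    have hA4 : N / 4 ≤ A.card := by omega
    rcases hsplit with hjoin | hunion
    · -- join split
      have hdBR : Disjoint B R := disjoint_of_subset_left hBS hSR
      by_cases hbr : N / 4 ≤ B.card + R.card
      · -- direct biclique in G
        obtain ⟨A', hA'sub, hA'card⟩ := exists_subset_card_eq hA4
        have hBR : N / 4 ≤ (B ∪ R).card := by
          rw [card_union_of_disjoint hdBR]; exact hbr
        obtain ⟨B', hB'sub, hB'card⟩ := exists_subset_card_eq hBR
        refine ⟨N / 4, le_rfl, Or.inl ⟨A', B', ?_, hA'card, hB'card, ?_⟩⟩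
        · refine Disjoint.mono hA'sub hB'sub ?_
          rw [disjoint_union_right]
          exact ⟨hd, disjoint_of_subset_left hAS hSR⟩
        · intro a ha b hb
          rcases mem_union.mp (hB'sub hb) with hbB | hbR
          · exact hjoin a (hA'sub ha) b hbB
          · exact (hRuniv b hbR a (hAS (hA'sub ha))).symm
      · -- recurse with R ∪ B
        have hcardRB : (R ∪ B).card = R.card + B.card :=
          card_union_of_disjoint hdBR.symm
        have hres := ih A (R ∪ B) Q
          (by omega)
          (by rw [disjoint_union_right]
              exact ⟨disjoint_of_subset_left hAS hSR, hd⟩)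
          (disjoint_of_subset_left hAS hSQ)
          (by rw [disjoint_union_left]
              exact ⟨hRQ, disjoint_of_subset_left hBS hSQ⟩)
          (by intro x hx s hs
              rcases mem_union.mp hx with hxR | hxB
              · exact hRuniv x hxR s (hAS hs)
              · exact (hjoin s hs x hxB).symm)
          (fun x hx s hs => hQuniv x hx s (hAS hs))
          (by omega) (by omega)
        obtain ⟨m, hm, hb⟩ := hres
        exact ⟨m, by omega, hb⟩
    · -- union split
      have hdBQ : Disjoint B Q := disjoint_of_subset_left hBS hSQ
      by_cases hbq : N / 4 ≤ B.card + Q.card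
      · -- direct biclique in Gᶜ
        obtain ⟨A', hA'sub, hA'card⟩ := exists_subset_card_eq hA4
        have hBQ : N / 4 ≤ (B ∪ Q).card := by
          rw [card_union_of_disjoint hdBQ]; exact hbq
        obtain ⟨B', hB'sub, hB'card⟩ := exists_subset_card_eq hBQ
        refine ⟨N / 4, le_rfl, Or.inr ⟨A', B', ?_, hA'card, hB'card, ?_⟩⟩
        · refine Disjoint.mono hA'sub hB'sub ?_
          rw [disjoint_union_right]
          exact ⟨hd, disjoint_of_subset_left hAS hSQ⟩
        · intro a ha b hb
          have haA := hA'sub ha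
          rcases mem_union.mp (hB'sub hb) with hbB | hbQ
          · exact (SimpleGraph.compl_adj _ _ _).mpr
              ⟨fun h => (disjoint_left.mp hd haA) (h ▸ hbB),
               hunion a haA b hbB⟩
          · refine (SimpleGraph.compl_adj _ _ _).mpr
              ⟨fun h => (disjoint_left.mp hSQ (hAS haA)) (h ▸ hbQ),
               fun h => hQuniv b hbQ a (hAS haA) h.symm⟩
      · -- recurse with Q ∪ B
        have hcardQB : (Q ∪ B).card = Q.card + B.card :=
          card_union_of_disjoint hdBQ.symm
        have hres := ih A R (Q ∪ B)
          (by omega)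
          (disjoint_of_subset_left hAS hSR)
          (by rw [disjoint_union_right]
              exact ⟨disjoint_of_subset_left hAS hSQ, hd⟩)
          (by rw [disjoint_union_right]
              exact ⟨hRQ, (disjoint_of_subset_left hBS hSR).symm⟩)
          (fun x hx s hs => hRuniv x hx s (hAS hs))
          (by intro x hx s hs
              rcases mem_union.mp hx with hxQ | hxB
              · exact hQuniv x hxQ s (hAS hs)
              · exact fun h => hunion s hs x hxB h.symm)
          (by omega) (by omega)
        obtain ⟨m, hm, hb⟩ := hres
        exact ⟨m, by omega, hb⟩

/-- every cograph on `n` vertices, or its complement,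
contains `K_{m,m}` with `m ≥ ⌊n/4⌋`. -/
theorem stmt_2 {V : Type*} [Fintype V] (G : SimpleGraph V) (h : IsCograph G) :
    ∃ m : ℕ, Fintype.card V / 4 ≤ m ∧ (HasBiclique G m ∨ HasBiclique Gᶜ m) := by
  classical
  have hres := cograph_main G h (Fintype.card V) Finset.univ ∅ ∅
    (by simp) (by simp) (by simp) (by simp) (by simp) (by simp)
    (by simp) (by simp)
  simpa using hres
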